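/- arXiv:1801.02901 — 2 statements merged into one kernel-verified Lean document; each statement's English description precedes it below -/
import Mathlib

section
/- Let n be a positive natural number, let A be a real symmetric n × n matrix, let λ be a real number such that vᵀ A v ≥ λ·‖v‖² for every v ∈ ℝⁿ, let d ∈ ℝⁿ with d_i ≠ 0 for all i, and let b ∈ ℝⁿ. If λ + min_{i} (b_i / d_i²) ≥ 0, then the matrix diag(d) · A · diag(d) + diag(b) is positive semidefinite, i.e. uᵀ (diag(d) A diag(d) + diag(b)) u ≥ 0 for all u ∈ ℝⁿ. (This is the linear-algebra core of Theorem 2: the Hessian of a composite E(s(a)), which equals D A D + diag(b) with D = diag(s'(a)) and b_i = (∂E/∂c)_i s''(a_i), is positive semidefinite under the convexification inequality.) -/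
theorem convexification_inequality_psd
    (n : ℕ) (hn : 0 < n)
    (A : Matrix (Fin n) (Fin n) ℝ) (hA : A.IsSymm)
    (lam : ℝ)
    (hlam : ∀ v : Fin n → ℝ,
      dotProduct v (A.mulVec v) ≥ lam * ∑ i, v i ^ 2)
    (d : Fin n → ℝ) (hd : ∀ i, d i ≠ 0)
    (b : Fin n → ℝ)
    (hmin : lam +
        Finset.univ.inf' (Finset.univ_nonempty_iff.mpr (Fin.pos_iff_nonempty.mp hn))
          (fun i => b i / (d i) ^ 2) ≥ 0) :
    ∀ u : Fin n → ℝ,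
      dotProduct u
        ((Matrix.diagonal d * A * Matrix.diagonal d + Matrix.diagonal b).mulVec u) ≥ 0 := by
  intro u
  set m : ℝ := Finset.univ.inf' (Finset.univ_nonempty_iff.mpr (Fin.pos_iff_nonempty.mp hn))
      (fun i => b i / (d i) ^ 2) with hm
  have hmle : ∀ i, m ≤ b i / (d i) ^ 2 := fun i =>
    Finset.inf'_le _ (Finset.mem_univ i)
  set v : Fin n → ℝ := fun i => d i * u i with hv
  have h1 : dotProduct u ((Matrix.diagonal d * A * Matrix.diagonal d).mulVec u)
      = dotProduct v (A.mulVec v) := by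
    simp [dotProduct, Matrix.mulVec, ← Matrix.mulVec_mulVec, hv,
      Matrix.mulVec_diagonal, Matrix.diagonal_mulVec_single]
    apply Finset.sum_congr rfl
    intro i _
    simp [Matrix.mulVec, dotProduct, Matrix.diagonal, Finset.mul_sum]
    ring_nf
  have h2 : dotProduct u ((Matrix.diagonal b).mulVec u) = ∑ i, b i * u i ^ 2 := by
    simp [dotProduct, Matrix.mulVec_diagonal]
    apply Finset.sum_congr rfl
    intro i _
    ring
  have h3 : ∀ i, b i * u i ^ 2 ≥ m * v i ^ 2 := by
    intro i
    have hb : b i * u i ^ 2 = (b i / (d i) ^ 2) * v i ^ 2 := by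
      have hvv : v i ^ 2 = d i ^ 2 * u i ^ 2 := by simp [hv]; ring
      rw [hvv, div_mul_eq_mul_div, mul_comm (d i ^ 2), ← mul_assoc,
        mul_div_assoc, div_self (pow_ne_zero 2 (hd i)), mul_one]
    rw [hb]
    exact mul_le_mul_of_nonneg_right (hmle i) (sq_nonneg _)
  have hsum : ∑ i, b i * u i ^ 2 ≥ m * ∑ i, v i ^ 2 := by
    rw [Finset.mul_sum]
    exact Finset.sum_le_sum fun i _ => h3 i
  have hAv := hlam v
  have hvsq : (0 : ℝ) ≤ ∑ i, v i ^ 2 := Finset.sum_nonneg fun i _ => sq_nonneg _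
  calc dotProduct u
        ((Matrix.diagonal d * A * Matrix.diagonal d + Matrix.diagonal b).mulVec u)
      = dotProduct v (A.mulVec v) + ∑ i, b i * u i ^ 2 := by
        rw [Matrix.add_mulVec, dotProduct_add, h1, h2]
    _ ≥ lam * ∑ i, v i ^ 2 + m * ∑ i, v i ^ 2 := add_le_add hAv hsum
    _ = (lam + m) * ∑ i, v i ^ 2 := by ring
    _ ≥ 0 := mul_nonneg hmin hvsq
end

section
/- Let n be a positive natural number, let f : EuclideanSpace ℝ (Fin n) → ℝ be twice continuously differentiable, let s : ℝ → ℝ be twice continuously differentiable, and let S be the coordinatewise map (S a)_i = s(a_i). Fix a point a ∈ ℝⁿ with s'(a_i) ≠ 0 for all i. Suppose there is a real λ such that the Hessian quadratic form of f at S(a) satisfies Σ_{i,j} (∂²f/∂c_i∂c_j)(S a)·v_i·v_j ≥ λ·‖v‖² for all v ∈ ℝⁿ, and that λ + min_i ((∂f/∂c_i)(S a)·s''(a_i)) / (s'(a_i))² ≥ 0. Then the Hessian of g = f ∘ S at a is positive semidefinite: Σ_{i,j} (∂²g/∂a_i∂a_j)(a)·u_i·u_j ≥ 0 for all u ∈ ℝⁿ.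 (Theorem 2 of the paper, single-sample case: a function node satisfying the convexification inequality preserves the convex condition.) -/
open scoped BigOperators

theorem function_node_preserves_convex_condition
    (n : ℕ) (hn : 0 < n)
    (f : EuclideanSpace ℝ (Fin n) → ℝ) (hf : ContDiff ℝ 2 f)
    (s : ℝ → ℝ) (hs : ContDiff ℝ 2 s)
    (S : EuclideanSpace ℝ (Fin n) → EuclideanSpace ℝ (Fin n))
    (hS : ∀ a i, S a i = s (a i))
    (a : EuclideanSpace ℝ (Fin n))
    (hd : ∀ i, deriv s (a i) ≠ 0)
    (lam : ℝ)
    (hlam : ∀ v : Fin n → ℝ,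
      ∑ i, ∑ j, (iteratedFDeriv ℝ 2 f (S a)
          ![EuclideanSpace.single i 1, EuclideanSpace.single j 1]) * v i * v j
        ≥ lam * ∑ i, v i ^ 2)
    (hineq : lam +
        Finset.univ.inf' (Finset.univ_nonempty_iff.mpr (Fin.pos_iff_nonempty.mp hn))
          (fun i =>
            fderiv ℝ f (S a) (EuclideanSpace.single i 1) * deriv (deriv s) (a i)
              / (deriv s (a i)) ^ 2) ≥ 0) :
    ∀ u : Fin n → ℝ,
      ∑ i, ∑ j, (iteratedFDeriv ℝ 2 (f ∘ S) a
          ![EuclideanSpace.single i 1, EuclideanSpace.single j 1]) * u i * u j ≥ 0 := by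
  classical
  set e : Fin n → EuclideanSpace ℝ (Fin n) := fun i => EuclideanSpace.single i 1 with he
  -- derivative data for s
  have hs_diff : Differentiable ℝ s := hs.differentiable two_ne_zero
  have hds_cd : ContDiff ℝ 1 (deriv s) := by
    have := (contDiff_succ_iff_deriv (f := s) (n := 1)).1 (by norm_num at hs ⊢; exact hs)
    exact this.2.2
  have hds_diff : Differentiable ℝ (deriv s) := hds_cd.differentiable one_ne_zero
  -- the derivative of S
  set Ds : EuclideanSpace ℝ (Fin n) → (EuclideanSpace ℝ (Fin n) →L[ℝ] EuclideanSpace ℝ (Fin n)) := fun x =>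
    (PiLp.continuousLinearEquiv 2 ℝ (fun _ : Fin n => ℝ)).symm.toContinuousLinearMap.comp
      (ContinuousLinearMap.pi (fun i => deriv s (x i) • (PiLp.proj (𝕜 := ℝ) 2 (fun _ : Fin n => ℝ) i)))
    with hDsdef
  have hDs_apply : ∀ x v i, Ds x v i = deriv s (x i) * v i := fun x v i => rfl
  have hDs : ∀ x, HasFDerivAt S (Ds x) x := by
    intro x
    rw [← hasFDerivWithinAt_univ]
    rw [hasFDerivWithinAt_euclidean]
    intro i
    have hco : (fun y : EuclideanSpace ℝ (Fin n) => S y i)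
        = (s ∘ (PiLp.proj (𝕜 := ℝ) 2 (fun _ : Fin n => ℝ) i)) := funext fun y => hS y i
    have h1 : HasFDerivAt (s ∘ (PiLp.proj (𝕜 := ℝ) 2 (fun _ : Fin n => ℝ) i))
        ((deriv s (x i)) • (PiLp.proj (𝕜 := ℝ) 2 (fun _ : Fin n => ℝ) i)) x :=
      (hs_diff (x i)).hasDerivAt.comp_hasFDerivAt x
        (PiLp.proj (𝕜 := ℝ) 2 (fun _ : Fin n => ℝ) i).hasFDerivAt
    have heq : (PiLp.proj (𝕜 := ℝ) 2 (fun _ : Fin n => ℝ) i) ∘L (Ds x)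
        = (deriv s (x i)) • (PiLp.proj (𝕜 := ℝ) 2 (fun _ : Fin n => ℝ) i) := by
      ext v
      exact hDs_apply x v i
    rw [hco, heq]
    exact h1.hasFDerivWithinAt
  have hDs_single : ∀ x j, Ds x (e j) = deriv s (x j) • e j := by
    intro x j
    ext i
    show Ds x (e j) i = (deriv s (x j) • e j) i
    rw [hDs_apply, PiLp.smul_apply, smul_eq_mul]
    by_cases h : i = j
    · subst h; rfl
    · simp [he, EuclideanSpace.single_apply, h]
  -- S is C^2
  have hS_cd : ContDiff ℝ 2 S := by
    rw [contDiff_euclidean]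
    intro i
    have hco : (fun y : EuclideanSpace ℝ (Fin n) => S y i)
        = (s ∘ (PiLp.proj (𝕜 := ℝ) 2 (fun _ : Fin n => ℝ) i)) := funext fun y => hS y i
    rw [hco]
    exact hs.comp (PiLp.proj (𝕜 := ℝ) 2 (fun _ : Fin n => ℝ) i).contDiff
  have hg_cd : ContDiff ℝ 2 (f ∘ S) := hf.comp hS_cd
  have hf_diff : Differentiable ℝ f := hf.differentiable two_ne_zero
  have hdf_cd : ContDiff ℝ 1 (fderiv ℝ f) := hf.fderiv_right (by norm_num)
  have hdf_diff : Differentiable ℝ (fderiv ℝ f) := hdf_cd.differentiable one_ne_zero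
  have hdg_cd : ContDiff ℝ 1 (fderiv ℝ (f ∘ S)) := hg_cd.fderiv_right (by norm_num)
  have hdg_diff : Differentiable ℝ (fderiv ℝ (f ∘ S)) := hdg_cd.differentiable one_ne_zero
  -- first derivative of g
  have hdg : ∀ x : EuclideanSpace ℝ (Fin n), fderiv ℝ (f ∘ S) x = (fderiv ℝ f (S x)).comp (Ds x) := fun x =>
    ((hf_diff (S x)).hasFDerivAt.comp x (hDs x)).fderiv
  have hφ : ∀ j, (fun x : EuclideanSpace ℝ (Fin n) => fderiv ℝ (f ∘ S) x (e j))
      = fun x : EuclideanSpace ℝ (Fin n) => deriv s (x j) * fderiv ℝ f (S x) (e j) := by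
    intro j
    funext x
    rw [hdg x]
    show fderiv ℝ f (S x) (Ds x (e j)) = _
    rw [hDs_single, map_smul]
    simp [mul_comm]
  -- key second-derivative formula
  have key : ∀ i j : Fin n, iteratedFDeriv ℝ 2 (f ∘ S) a ![e i, e j]
      = deriv s (a i) * deriv s (a j) * iteratedFDeriv ℝ 2 f (S a) ![e i, e j]
        + (if j = i then fderiv ℝ f (S a) (e j) * deriv (deriv s) (a j) else 0) := by
    intro i j
    have hD2 : HasFDerivAt (fderiv ℝ (f ∘ S)) (fderiv ℝ (fderiv ℝ (f ∘ S)) a) a :=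
      (hdg_diff a).hasFDerivAt
    -- left side as derivative of evaluation
    have hleft : HasFDerivAt (fun x : EuclideanSpace ℝ (Fin n) => fderiv ℝ (f ∘ S) x (e j))
        ((ContinuousLinearMap.apply ℝ ℝ (e j)).comp (fderiv ℝ (fderiv ℝ (f ∘ S)) a)) a :=
      (ContinuousLinearMap.apply ℝ ℝ (e j)).hasFDerivAt.comp a hD2
    -- right side pieces
    have h1 : HasFDerivAt (deriv s ∘ (PiLp.proj (𝕜 := ℝ) 2 (fun _ : Fin n => ℝ) j))
        ((deriv (deriv s) (a j)) • (PiLp.proj (𝕜 := ℝ) 2 (fun _ : Fin n => ℝ) j)) a :=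
      (hds_diff (a j)).hasDerivAt.comp_hasFDerivAt a
        (PiLp.proj (𝕜 := ℝ) 2 (fun _ : Fin n => ℝ) j).hasFDerivAt
    have h2 : HasFDerivAt (fun x : EuclideanSpace ℝ (Fin n) => fderiv ℝ f (S x) (e j))
        ((ContinuousLinearMap.apply ℝ ℝ (e j)).comp
          ((fderiv ℝ (fderiv ℝ f) (S a)).comp (Ds a))) a :=
      (ContinuousLinearMap.apply ℝ ℝ (e j)).hasFDerivAt.comp a
        (((hdf_diff (S a)).hasFDerivAt).comp a (hDs a))
    have hmul : HasFDerivAt (fun x : EuclideanSpace ℝ (Fin n) =>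
          deriv s (x j) * fderiv ℝ f (S x) (e j))
        ((deriv s ∘ (PiLp.proj (𝕜 := ℝ) 2 (fun _ : Fin n => ℝ) j)) a •
            ((ContinuousLinearMap.apply ℝ ℝ (e j)).comp
              ((fderiv ℝ (fderiv ℝ f) (S a)).comp (Ds a)))
          + (fderiv ℝ f (S a) (e j)) •
              ((deriv (deriv s) (a j)) • (PiLp.proj (𝕜 := ℝ) 2 (fun _ : Fin n => ℝ) j))) a :=
      h1.mul h2
    rw [← hφ j] at hmul
    have huniq := hleft.unique hmul
    have := congrArg (fun (L : EuclideanSpace ℝ (Fin n) →L[ℝ] ℝ) => L (e i)) huniq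
    simp only [ContinuousLinearMap.comp_apply, ContinuousLinearMap.add_apply,
      ContinuousLinearMap.smul_apply, ContinuousLinearMap.apply_apply] at this
    rw [iteratedFDeriv_two_apply, iteratedFDeriv_two_apply]
    simp only [Matrix.cons_val_zero, Matrix.cons_val_one, Matrix.head_cons]
    rw [this]
    rw [hDs_single]
    have hproj : (PiLp.proj (𝕜 := ℝ) 2 (fun _ : Fin n => ℝ) j) (e i) = if j = i then 1 else 0 := by
      show (e i) j = _
      simp only [he, EuclideanSpace.single_apply]
    rw [hproj, map_smul]
    simp only [smul_eq_mul, Function.comp_apply, PiLp.proj_apply,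
      ContinuousLinearMap.smul_apply]
    by_cases h : j = i
    · subst h
      simp only [if_pos]
      ring
    · simp only [if_neg h, mul_zero, smul_zero, add_zero, mul_zero]
      ring
  -- now the algebraic part
  intro u
  set F : Fin n → ℝ := fun i => fderiv ℝ f (S a) (e i) with hF
  set v : Fin n → ℝ := fun i => deriv s (a i) * u i with hv
  set m : ℝ := Finset.univ.inf' (Finset.univ_nonempty_iff.mpr (Fin.pos_iff_nonempty.mp hn))
      (fun i => F i * deriv (deriv s) (a i) / (deriv s (a i)) ^ 2) with hm
  have hsum : ∑ i, ∑ j, (iteratedFDeriv ℝ 2 (f ∘ S) a ![e i, e j]) * u i * u j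
      = (∑ i, ∑ j, (iteratedFDeriv ℝ 2 f (S a) ![e i, e j]) * v i * v j)
        + ∑ i, F i * deriv (deriv s) (a i) * u i ^ 2 := by
    rw [← Finset.sum_add_distrib]
    refine Finset.sum_congr rfl fun i _ => ?_
    have : ∀ j, (iteratedFDeriv ℝ 2 (f ∘ S) a ![e i, e j]) * u i * u j
        = (iteratedFDeriv ℝ 2 f (S a) ![e i, e j]) * v i * v j
          + (if j = i then F i * deriv (deriv s) (a i) * u i ^ 2 else 0) := by
      intro j
      rw [key i j]
      by_cases h : j = i
      · subst h
        simp only [eq_self_iff_true, if_true, hv, hF]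
        ring
      · simp only [if_neg h, hv]
        ring
    rw [Finset.sum_congr rfl fun j _ => this j, Finset.sum_add_distrib,
      Finset.sum_ite_eq' Finset.univ i (fun _ => F i * deriv (deriv s) (a i) * u i ^ 2)]
    simp
  rw [hsum]
  have hterm : ∀ i, F i * deriv (deriv s) (a i) * u i ^ 2 ≥ m * v i ^ 2 := by
    intro i
    have h1 : m ≤ F i * deriv (deriv s) (a i) / (deriv s (a i)) ^ 2 :=
      Finset.inf'_le _ (Finset.mem_univ i)
    have hne := hd i
    have h2 : (F i * deriv (deriv s) (a i) / (deriv s (a i)) ^ 2) * v i ^ 2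
        = F i * deriv (deriv s) (a i) * u i ^ 2 := by
      rw [hv]
      field_simp
    rw [← h2]
    exact mul_le_mul_of_nonneg_right h1 (sq_nonneg _)
  have hsum2 : ∑ i, F i * deriv (deriv s) (a i) * u i ^ 2 ≥ m * ∑ i, v i ^ 2 := by
    rw [Finset.mul_sum]
    exact Finset.sum_le_sum fun i _ => hterm i
  have h3 := hlam v
  have h4 : (0:ℝ) ≤ ∑ i, v i ^ 2 := Finset.sum_nonneg fun i _ => sq_nonneg _
  have h5 : (0:ℝ) ≤ (lam + m) * ∑ i, v i ^ 2 := mul_nonneg (by rw [hm] at *; exact hineq) h4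
  nlinarith [h3, hsum2, h5]
end
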